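/- Let q be a prime power, χ a nontrivial multiplicative character of F_q (extended by χ(0)=0), λ ∈ F_q^*, and A, B nonempty subsets of F_q^*. Then |∑_{a∈A} ∑_{b∈B} χ(ab+λ)| ≤ √(q·|A|·|B|) · √(1 − max(|A|,|B|)/q). -/

import Mathlib

open Finset Complex

lemma charsum_offdiag {F : Type*} [Field F] [Fintype F] [DecidableEq F]
    (χ : MulChar F ℂ) (hχ : χ ≠ 1) {lam : F} (hlam : lam ≠ 0)
    {b b' : F} (hb : b ≠ 0) (hb' : b' ≠ 0) (hne : b ≠ b') :
    ∑ a : F, χ (a * b + lam) * (starRingEnd ℂ) (χ (a * b' + lam)) = -χ (b * b'⁻¹) := by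
  set c : F := lam * (b - b') with hc_def
  have hc : c ≠ 0 := mul_ne_zero hlam (sub_ne_zero.mpr hne)
  -- reindex a ↦ t = a*b + lam
  have step1 : ∑ a : F, χ (a * b + lam) * (starRingEnd ℂ) (χ (a * b' + lam))
      = ∑ t : F, χ (t * b * (t * b' + c)⁻¹) := by
    refine Fintype.sum_equiv ((Equiv.mulRight₀ b hb).trans (Equiv.addRight lam)) _ _ ?_
    intro a
    have ht : (a * b + lam) * b' + c = (a * b' + lam) * b := by ring
    simp only [Equiv.trans_apply, Equiv.mulRight₀_apply, Equiv.coe_addRight, Equiv.coe_addRight]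
    rw [ht]
    rcases eq_or_ne (a * b' + lam) 0 with h0 | h0
    · rw [h0, MulChar.map_zero, map_zero, mul_zero, zero_mul, inv_zero, mul_zero,
        MulChar.map_zero]
    · have key : (a * b + lam) * b * ((a * b' + lam) * b)⁻¹
          = (a * b + lam) * (a * b' + lam)⁻¹ := by field_simp
      rw [key, map_mul, ← MulChar.inv_apply', ← MulChar.star_apply', starRingEnd_apply]
  rw [step1]
  set t₀ : F := -c * b'⁻¹ with ht₀_def
  have ht₀d : t₀ * b' + c = 0 := by rw [ht₀_def]; field_simp; ring
  have hdenom : ∀ t : F, t ≠ t₀ → t * b' + c ≠ 0 := by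
    intro t ht h
    apply ht
    rw [ht₀_def]
    field_simp
    linear_combination h
  have split : ∑ t : F, χ (t * b * (t * b' + c)⁻¹)
      = ∑ t ∈ univ.erase t₀, χ (t * b * (t * b' + c)⁻¹) := by
    rw [← Finset.sum_erase_add _ _ (Finset.mem_univ t₀), ht₀d, inv_zero, mul_zero,
      MulChar.map_zero, add_zero]
  rw [split]
  have hbij : ∑ t ∈ univ.erase t₀, χ (t * b * (t * b' + c)⁻¹)
      = ∑ y ∈ univ.erase (b * b'⁻¹), χ y := by
    refine Finset.sum_nbij' (fun t => t * b * (t * b' + c)⁻¹)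
      (fun y => y * c * (b - y * b')⁻¹) ?_ ?_ ?_ ?_ ?_
    · intro t ht
      rw [Finset.mem_erase]
      refine ⟨?_, Finset.mem_univ _⟩
      have hd := hdenom t (Finset.ne_of_mem_erase ht)
      intro h
      apply hc
      have h2 : b * c = 0 := by field_simp [hd] at h; linear_combination -b * h
      exact (mul_eq_zero.mp h2).resolve_left hb
    · intro y hy
      rw [Finset.mem_erase]
      refine ⟨?_, Finset.mem_univ _⟩
      have hy' := Finset.ne_of_mem_erase hy
      have hyd : b - y * b' ≠ 0 := by
        intro h
        apply hy'
        field_simp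
        linear_combination -h
      intro h
      rw [ht₀_def] at h
      apply hc
      have h2 : c * b = 0 := by field_simp [hyd] at h; linear_combination c * h
      exact (mul_eq_zero.mp h2).resolve_right hb
    · intro t ht
      have hd := hdenom t (Finset.ne_of_mem_erase ht)
      have e1 : b - t * b * (t * b' + c)⁻¹ * b' = b * c * (t * b' + c)⁻¹ := by
        field_simp
        ring
      simp only [e1]
      field_simp
    · intro y hy
      have hy' := Finset.ne_of_mem_erase hy
      have hyd : b - y * b' ≠ 0 := by
        intro h
        apply hy'
        field_simp
        linear_combination -h
      have e2 : y * c * (b - y * b')⁻¹ * b' + c = c * b * (b - y * b')⁻¹ := by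
        field_simp
        ring
      simp only [e2]
      field_simp
    · intro t ht
      rfl
  rw [hbij]
  have h0 := MulChar.sum_eq_zero_of_ne_one hχ
  rw [← Finset.sum_erase_add _ _ (Finset.mem_univ (b * b'⁻¹))] at h0
  linear_combination h0

lemma charsum_absone {F : Type*} [Field F] [Fintype F]
    (χ : MulChar F ℂ) {y : F} (hy : y ≠ 0) :
    χ y * (starRingEnd ℂ) (χ y) = 1 := by
  rw [starRingEnd_apply, MulChar.star_apply', MulChar.inv_apply', ← map_mul,
    mul_inv_cancel₀ hy, map_one]

lemma charsum_diag {F : Type*} [Field F] [Fintype F] [DecidableEq F]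
    (χ : MulChar F ℂ) {lam : F} (hlam : lam ≠ 0) {b : F} (hb : b ≠ 0) :
    ∑ a : F, χ (a * b + lam) * (starRingEnd ℂ) (χ (a * b + lam))
      = (Fintype.card F : ℂ) - 1 := by
  have key : ∀ a : F, a ≠ -lam * b⁻¹ → a * b + lam ≠ 0 := by
    intro a ha h
    apply ha
    field_simp
    linear_combination h
  rw [← Finset.sum_erase_add _ _ (Finset.mem_univ (-lam * b⁻¹))]
  have h0 : -lam * b⁻¹ * b + lam = 0 := by field_simp; ring
  rw [h0, MulChar.map_zero, map_zero, mul_zero, add_zero]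
  rw [Finset.sum_congr rfl (fun a ha =>
    charsum_absone χ (key a (Finset.ne_of_mem_erase ha)))]
  rw [Finset.sum_const, Finset.card_erase_of_mem (Finset.mem_univ _), Finset.card_univ]
  simp [Nat.cast_sub Fintype.card_pos]

lemma charsum_keyC {F : Type*} [Field F] [Fintype F] [DecidableEq F]
    (χ : MulChar F ℂ) (hχ : χ ≠ 1) {lam : F} (hlam : lam ≠ 0)
    (B : Finset F) (hB0 : (0 : F) ∉ B) :
    ∑ a ∈ univ.erase 0,
        (∑ b ∈ B, χ (a * b + lam)) * (starRingEnd ℂ) (∑ b ∈ B, χ (a * b + lam))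
      = (Fintype.card F : ℂ) * B.card - (B.card : ℂ)^2
        - (∑ b ∈ B, χ b) * (starRingEnd ℂ) (∑ b ∈ B, χ b) := by
  have hBne : ∀ b ∈ B, b ≠ 0 := fun b hb => ne_of_mem_of_not_mem hb hB0
  set f : F → ℂ := fun a => ∑ b ∈ B, χ (a * b + lam) with hf
  have h1 : ∑ a ∈ univ.erase 0, f a * (starRingEnd ℂ) (f a) + f 0 * (starRingEnd ℂ) (f 0)
      = ∑ a : F, f a * (starRingEnd ℂ) (f a) :=
    Finset.sum_erase_add _ _ (Finset.mem_univ 0)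
  have h2 : ∑ a : F, f a * (starRingEnd ℂ) (f a)
      = ∑ b ∈ B, ∑ b' ∈ B, ∑ a : F, χ (a * b + lam) * (starRingEnd ℂ) (χ (a * b' + lam)) := by
    simp_rw [hf, map_sum, Finset.sum_mul_sum]
    rw [Finset.sum_comm]
    exact Finset.sum_congr rfl fun b _ => Finset.sum_comm
  have h3 : ∑ b ∈ B, ∑ b' ∈ B, ∑ a : F, χ (a * b + lam) * (starRingEnd ℂ) (χ (a * b' + lam))
      = ∑ b ∈ B, (-(∑ b' ∈ B.erase b, χ b * (starRingEnd ℂ) (χ b')) + ((Fintype.card F : ℂ) - 1)) := by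
    refine Finset.sum_congr rfl fun b hb => ?_
    rw [← Finset.sum_erase_add _ _ hb, charsum_diag χ hlam (hBne b hb), ← Finset.sum_neg_distrib]
    congr 1
    refine Finset.sum_congr rfl fun b' hb' => ?_
    rw [charsum_offdiag χ hχ hlam (hBne b hb) (hBne b' (Finset.mem_of_mem_erase hb'))
      (Finset.ne_of_mem_erase hb').symm]
    rw [map_mul, ← MulChar.inv_apply', ← MulChar.star_apply', starRingEnd_apply]
  have h4 : ∑ b ∈ B, (-(∑ b' ∈ B.erase b, χ b * (starRingEnd ℂ) (χ b')) + ((Fintype.card F : ℂ) - 1))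
      = -(∑ b ∈ B, ∑ b' ∈ B.erase b, χ b * (starRingEnd ℂ) (χ b'))
        + ((Fintype.card F : ℂ) - 1) * B.card := by
    rw [Finset.sum_add_distrib, Finset.sum_neg_distrib, Finset.sum_const, nsmul_eq_mul, mul_comm]
  have h5 : ∀ b ∈ B, ∑ b' ∈ B.erase b, χ b * (starRingEnd ℂ) (χ b') + χ b * (starRingEnd ℂ) (χ b)
      = ∑ b' ∈ B, χ b * (starRingEnd ℂ) (χ b') := fun b hb => Finset.sum_erase_add _ _ hb
  have h5' : ∑ b ∈ B, ∑ b' ∈ B.erase b, χ b * (starRingEnd ℂ) (χ b')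
      = (∑ b ∈ B, χ b) * (starRingEnd ℂ) (∑ b ∈ B, χ b) - B.card := by
    have := Finset.sum_congr rfl h5
    rw [Finset.sum_add_distrib] at this
    have h6 : ∑ b ∈ B, χ b * (starRingEnd ℂ) (χ b) = (B.card : ℂ) := by
      rw [Finset.sum_congr rfl fun b hb => charsum_absone χ (hBne b hb), Finset.sum_const,
        nsmul_eq_mul, mul_one]
    rw [h6] at this
    rw [map_sum, Finset.sum_mul_sum]
    linear_combination this
  have h7 : f 0 * (starRingEnd ℂ) (f 0) = (B.card : ℂ)^2 := by
    have : f 0 = (B.card : ℂ) * χ lam := by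
      simp [hf, Finset.sum_const]
    rw [this, map_mul, map_natCast, mul_mul_mul_comm, charsum_absone χ hlam, mul_one, sq]
  rw [h2, h3, h4, h5'] at h1
  linear_combination h1 - h7

lemma charsum_core {F : Type*} [Field F] [Fintype F] [DecidableEq F]
    (χ : MulChar F ℂ) (hχ : χ ≠ 1) {lam : F} (hlam : lam ≠ 0)
    (A B : Finset F) (hA0 : (0 : F) ∉ A) (hB0 : (0 : F) ∉ B) :
    (‖∑ a ∈ A, ∑ b ∈ B, χ (a * b + lam)‖)^2 ≤
      (A.card : ℝ) * B.card * ((Fintype.card F : ℝ) - B.card) := by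
  set f : F → ℂ := fun a => ∑ b ∈ B, χ (a * b + lam) with hf
  have hreal : ∑ a ∈ univ.erase 0, Complex.normSq (f a)
      = (Fintype.card F : ℝ) * B.card - (B.card : ℝ)^2
        - Complex.normSq (∑ b ∈ B, χ b) := by
    have := charsum_keyC χ hχ hlam B hB0
    simp_rw [Complex.mul_conj] at this
    have h2 : ((∑ a ∈ univ.erase 0, Complex.normSq (f a) : ℝ) : ℂ)
        = (((Fintype.card F : ℝ) * B.card - (B.card : ℝ)^2
            - Complex.normSq (∑ b ∈ B, χ b) : ℝ) : ℂ) := by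
      push_cast
      exact this
    exact_mod_cast h2
  have hbound : ∑ a ∈ univ.erase 0, Complex.normSq (f a)
      ≤ (Fintype.card F : ℝ) * B.card - (B.card : ℝ)^2 := by
    rw [hreal]
    have := Complex.normSq_nonneg (∑ b ∈ B, χ b)
    linarith
  have hsubset : A ⊆ univ.erase 0 :=
    fun a ha => Finset.mem_erase.mpr ⟨ne_of_mem_of_not_mem ha hA0, Finset.mem_univ a⟩
  have hsub : ∑ a ∈ A, Complex.normSq (f a) ≤ ∑ a ∈ univ.erase 0, Complex.normSq (f a) :=
    Finset.sum_le_sum_of_subset_of_nonneg hsubset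
      (fun a _ _ => Complex.normSq_nonneg _)
  have hcs : (∑ a ∈ A, ‖f a‖)^2
      ≤ (A.card : ℝ) * ∑ a ∈ A, (‖f a‖)^2 := sq_sum_le_card_mul_sum_sq
  have htri : ‖∑ a ∈ A, f a‖ ≤ ∑ a ∈ A, ‖f a‖ :=
    norm_sum_le _ _
  have h1 : (‖∑ a ∈ A, f a‖)^2 ≤ (∑ a ∈ A, ‖f a‖)^2 :=
    pow_le_pow_left₀ (norm_nonneg _) htri 2
  have h2 : ∑ a ∈ A, (‖f a‖)^2 = ∑ a ∈ A, Complex.normSq (f a) :=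
    Finset.sum_congr rfl fun a _ => Complex.sq_norm _
  calc (‖∑ a ∈ A, ∑ b ∈ B, χ (a * b + lam)‖)^2
      ≤ (A.card : ℝ) * ∑ a ∈ A, Complex.normSq (f a) := by
        rw [← h2]; exact le_trans h1 hcs
    _ ≤ (A.card : ℝ) * ((Fintype.card F : ℝ) * B.card - (B.card : ℝ)^2) := by
        have := le_trans hsub hbound
        exact mul_le_mul_of_nonneg_left this (Nat.cast_nonneg _)
    _ = (A.card : ℝ) * B.card * ((Fintype.card F : ℝ) - B.card) := by ring

/-- double character sum estimate (Proposition on charsum:sym). -/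
theorem charsum_double_estimate
    (F : Type*) [Field F] [Fintype F] [DecidableEq F]
    (χ : MulChar F ℂ) (hχ : χ ≠ 1)
    (lam : F) (hlam : lam ≠ 0)
    (A B : Finset F) (hA : A.Nonempty) (hB : B.Nonempty)
    (hA0 : (0 : F) ∉ A) (hB0 : (0 : F) ∉ B) :
    ‖∑ a ∈ A, ∑ b ∈ B, χ (a * b + lam)‖ ≤
      Real.sqrt ((Fintype.card F : ℝ) * A.card * B.card) *
        Real.sqrt (1 - (max A.card B.card : ℝ) / (Fintype.card F : ℝ)) := by
  have hq : (0:ℝ) < (Fintype.card F : ℝ) := by exact_mod_cast Fintype.card_pos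
  have h1 := charsum_core χ hχ hlam A B hA0 hB0
  have hswap : ∑ a ∈ A, ∑ b ∈ B, χ (a * b + lam)
      = ∑ b ∈ B, ∑ a ∈ A, χ (b * a + lam) := by
    rw [Finset.sum_comm]
    exact Finset.sum_congr rfl fun b _ => Finset.sum_congr rfl fun a _ => by rw [mul_comm]
  have h2 := charsum_core χ hχ hlam B A hB0 hA0
  rw [← hswap] at h2
  set x := ‖∑ a ∈ A, ∑ b ∈ B, χ (a * b + lam)‖ with hx
  set q : ℝ := (Fintype.card F : ℝ) with hq_def
  have hmax : x^2 ≤ (A.card : ℝ) * B.card * (q - ((max A.card B.card : ℕ) : ℝ)) := by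
    rcases max_choice A.card B.card with h | h <;> rw [h]
    · calc x^2 ≤ (B.card:ℝ) * A.card * (q - A.card) := h2
        _ = (A.card:ℝ) * B.card * (q - A.card) := by ring
    · exact h1
  have hRHS : Real.sqrt (q * A.card * B.card) * Real.sqrt (1 - (max A.card B.card : ℝ) / q)
      = Real.sqrt ((A.card : ℝ) * B.card * (q - ((max A.card B.card : ℕ) : ℝ))) := by
    rw [← Real.sqrt_mul (by positivity)]
    congr 1
    push_cast
    field_simp
  rw [hRHS, show x = Real.sqrt (x^2) from (Real.sqrt_sq (norm_nonneg _)).symm]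
  exact Real.sqrt_le_sqrt hmax
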